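/- Let Q₀ be a compact convex subset of ℝⁿ and let Q = {(t·x, t) : x ∈ Q₀, 0 ≤ t ≤ 1} ⊆ ℝⁿ⁺¹ be the suspension (cone) over Q₀. If Q₀ has infinitely many extreme points, then Q is not LNC. -/

import Mathlib

open Set Filter Topology

/-- Locally nonconical (LNC). -/
def LNC {X : Type*} [AddCommGroup X] [Module ℝ X] [TopologicalSpace X] (Q : Set X) : Prop :=
  ∀ x ∈ Q, ∀ x' ∈ Q,
    ∃ U, U ⊆ Q ∧ U ∈ nhdsWithin x Q ∧ ∀ u ∈ U, u + (2⁻¹ : ℝ) • (x' - x) ∈ Q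

/-- Let `Q₀ ⊆ ℝⁿ` be compact and convex and let
`Q = {(t • x, t) : x ∈ Q₀, 0 ≤ t ≤ 1} ⊆ ℝⁿ⁺¹` be the suspension (cone) over `Q₀`.
If `Q₀` has infinitely many extreme points, then `Q` is not LNC. -/
theorem suspension_not_lnc {n : ℕ}
    (Q₀ : Set (EuclideanSpace ℝ (Fin n)))
    (hcomp : IsCompact Q₀) (hconv : Convex ℝ Q₀)
    (hext : (Q₀.extremePoints ℝ).Infinite) :
    ¬ LNC {p : EuclideanSpace ℝ (Fin n) × ℝ |
        ∃ x ∈ Q₀, ∃ t ∈ Set.Icc (0 : ℝ) 1, p = (t • x, t)} := by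
  intro hLNC
  set Q : Set (EuclideanSpace ℝ (Fin n) × ℝ) :=
    {p | ∃ x ∈ Q₀, ∃ t ∈ Set.Icc (0 : ℝ) 1, p = (t • x, t)} with hQ
  -- an accumulation point of the extreme points
  obtain ⟨e, heQ₀, hacc⟩ :=
    hext.exists_accPt_of_subset_isCompact hcomp (extremePoints_subset)
  rw [accPt_iff_nhds] at hacc
  -- Q₀ is nonempty
  obtain ⟨z, hz⟩ := hext.nonempty
  have hzQ₀ : z ∈ Q₀ := extremePoints_subset hz
  have hxQ : ((1 : ℝ) • e, (1 : ℝ)) ∈ Q := ⟨e, heQ₀, 1, by norm_num⟩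
  have hx'Q : ((0 : ℝ) • z, (0 : ℝ)) ∈ Q := ⟨z, hzQ₀, 0, by norm_num⟩
  obtain ⟨U, hUQ, hUnhds, hU⟩ := hLNC _ hxQ _ hx'Q
  rw [mem_nhdsWithin] at hUnhds
  obtain ⟨V, hVopen, hVx, hVQ⟩ := hUnhds
  -- the preimage of V under x ↦ (x, 1) is a neighborhood of e
  have hcont : Continuous fun x : EuclideanSpace ℝ (Fin n) => (x, (1 : ℝ)) :=
    continuous_id.prodMk continuous_const
  have hpre : (fun x : EuclideanSpace ℝ (Fin n) => (x, (1 : ℝ))) ⁻¹' V ∈ 𝓝 e := by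
    apply hcont.continuousAt.preimage_mem_nhds
    have : ((1 : ℝ) • e, (1 : ℝ)) = (e, (1 : ℝ)) := by simp
    rw [this] at hVx
    exact hVopen.mem_nhds hVx
  obtain ⟨e', ⟨he'V, he'ext⟩, he'ne⟩ := hacc _ hpre
  have he'Q₀ : e' ∈ Q₀ := extremePoints_subset he'ext
  have he'Q : (e', (1 : ℝ)) ∈ Q := ⟨e', he'Q₀, 1, ⟨zero_le_one, le_refl 1⟩, by simp⟩
  have he'U : (e', (1 : ℝ)) ∈ U := hVQ ⟨he'V, he'Q⟩
  have := hU _ he'U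
  -- compute the shifted point
  obtain ⟨y, hyQ₀, t, ht, heq⟩ := this
  have h2 : (e', (1 : ℝ)) + (2⁻¹ : ℝ) • (((0 : ℝ) • z, (0 : ℝ)) - ((1 : ℝ) • e, (1 : ℝ)))
      = (e' - (2⁻¹ : ℝ) • e, (2⁻¹ : ℝ)) := by
    simp [Prod.ext_iff, smul_sub, sub_eq_add_neg]
    norm_num
  rw [h2] at heq
  have ht2 : t = 2⁻¹ := by
    have := congrArg Prod.snd heq
    simpa using this.symm
  subst ht2
  have h1 : e' - (2⁻¹ : ℝ) • e = (2⁻¹ : ℝ) • y := congrArg Prod.fst heq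
  -- so e' = midpoint of y and e, contradicting extremality
  have hmid : e' = (2⁻¹ : ℝ) • y + (2⁻¹ : ℝ) • e := by
    have : e' = (2⁻¹ : ℝ) • y + (2⁻¹ : ℝ) • e := by
      rw [← h1]; abel
    exact this
  have hopen : e' ∈ openSegment ℝ y e := by
    rw [openSegment_eq_image]
    exact ⟨2⁻¹, by norm_num, by rw [hmid]; module⟩
  obtain ⟨-, he2⟩ := (mem_extremePoints.1 he'ext).2 _ hyQ₀ _ heQ₀ hopen
  exact he'ne he2.symm
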